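/- Let f be an essentially bounded measurable complex-valued function on the circle ℝ/2πℤ, with Fourier coefficients a_k = (1/2π)∫₀^{2π} f(e^{iθ}) e^{−ikθ} dθ, and for each n ≥ 0 let T_n(f) be the (n+1)×(n+1) Toeplitz matrix with (k,ℓ)-entry a_{ℓ−k} for 0 ≤ k, ℓ ≤ n. Then lim_{n→∞} ‖T_n(f)‖ = ‖f‖_∞, where ‖T_n(f)‖ is the operator norm of T_n(f) acting on Euclidean ℂ^{n+1} and ‖f‖_∞ is the essential supremum norm of f. -/

import Mathlib

open Filter Topology MeasureTheory AddCircle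

local instance : Fact (0 < 2 * Real.pi) := ⟨by positivity⟩

/-- The `(n+1) × (n+1)` Toeplitz matrix of `f`, with `(k, ℓ)` entry the Fourier
coefficient `a_{ℓ - k}` of `f`. -/
noncomputable def toeplitzMat (f : AddCircle (2 * Real.pi) → ℂ) (n : ℕ) :
    Matrix (Fin (n + 1)) (Fin (n + 1)) ℂ :=
  fun k l => fourierCoeff f ((l : ℤ) - (k : ℤ))

/-- The operator norm of a square complex matrix acting on Euclidean space `ℂ^n`. -/
noncomputable def matOpNorm {n : ℕ} (M : Matrix (Fin n) (Fin n) ℂ) : ℝ :=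
  ‖LinearMap.toContinuousLinearMap (Matrix.toEuclideanLin M)‖

section TpAuxSection
open Finset ENNReal

namespace TpAux
noncomputable section
abbrev μ₀ : Measure (AddCircle (2*Real.pi)) := haarAddCircle
variable {f g h : AddCircle (2 * Real.pi) → ℂ}

lemma fourierCoeff_congr (hfg : f =ᵐ[μ₀] g) (i : ℤ) : fourierCoeff f i = fourierCoeff g i :=
  integral_congr_ae (by filter_upwards [hfg] with t ht; rw [ht])

lemma norm_fourier_apply (m : ℤ) (t : AddCircle (2*Real.pi)) : ‖fourier m t‖ = 1 := by
  simp [Circle.norm_coe]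

lemma integrable_fourier_mul (hf : MemLp f ⊤ μ₀) (m : ℤ) :
    Integrable (fun t => fourier m t * f t) μ₀ := by
  refine Integrable.bdd_mul ?_ ((map_continuous (fourier m)).aestronglyMeasurable) (c := 1) (Eventually.of_forall fun t => ?_)
  · exact (hf.mono_exponent le_top).integrable le_rfl
  · simp [Circle.norm_coe]

lemma integral_fourier_mul (m : ℤ) :
    ∫ t, fourier m t * f t ∂μ₀ = fourierCoeff f (-m) := by
  rw [fourierCoeff, neg_neg]
  simp [smul_eq_mul]

lemma fourierCoeff_fourier_mul (m k : ℤ) :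
    fourierCoeff (fun t => fourier m t * f t) k = fourierCoeff f (k - m) := by
  rw [fourierCoeff]
  have : ∀ t : AddCircle (2*Real.pi), fourier (-k) t • (fourier m t * f t)
      = fourier (-(k - m)) t * f t := by
    intro t
    rw [smul_eq_mul, ← mul_assoc, ← fourier_add]
    congr 2
    ring
  simp_rw [this]
  rw [integral_fourier_mul, neg_neg]

lemma memLp_mul (hf : MemLp f ⊤ μ₀) (hg : MemLp g 2 μ₀) :
    MemLp (fun t => f t * g t) 2 μ₀ := by
  refine ⟨hf.1.mul hg.1, ?_⟩
  calc eLpNorm (fun t => f t * g t) 2 μ₀ = eLpNorm (f • g) 2 μ₀ := rfl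
    _ ≤ eLpNorm f ⊤ μ₀ * eLpNorm g 2 μ₀ :=
        eLpNorm_smul_le_eLpNorm_top_mul_eLpNorm 2 hg.1 f
    _ < ⊤ := ENNReal.mul_lt_top hf.2 hg.2

lemma eLpNorm_mul_le (hf : MemLp f ⊤ μ₀) (hg : MemLp g 2 μ₀) :
    eLpNorm (fun t => f t * g t) 2 μ₀ ≤ eLpNorm f ⊤ μ₀ * eLpNorm g 2 μ₀ :=
  eLpNorm_smul_le_eLpNorm_top_mul_eLpNorm 2 hg.1 f

lemma hasSum_sq_fourierCoeff (hh : MemLp h 2 μ₀) :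
    HasSum (fun i : ℤ => ‖fourierCoeff h i‖ ^ 2) ((eLpNorm h 2 μ₀).toReal ^ 2) := by
  have h2 : ((2:ℝ≥0∞)).toReal = (2:ℝ) := by norm_num
  have h1 := lp.hasSum_norm (E := fun _ : ℤ => ℂ) (p := 2) (by norm_num)
    (fourierBasis.repr (hh.toLp h))
  rw [h2] at h1
  have hn : ‖fourierBasis.repr (hh.toLp h)‖ = (eLpNorm h 2 μ₀).toReal := by
    rw [LinearIsometryEquiv.norm_map, Lp.norm_toLp]
  rw [hn] at h1
  have hc : ∀ i : ℤ, fourierBasis.repr (hh.toLp h) i = fourierCoeff h i := by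
    intro i
    rw [fourierBasis_repr]
    exact integral_congr_ae (by filter_upwards [hh.coeFn_toLp] with t ht; rw [ht])
  simp only [show ((2:ℝ)) = ((2:ℕ):ℝ) by norm_num, Real.rpow_natCast, hc] at h1
  exact h1

lemma sum_shift {M : Type*} [AddCommMonoid M] (φ : ℤ → M) (r : ℤ) (n : ℕ) :
    ∑ ℓ : Fin (n+1), φ (r - (ℓ:ℤ)) = ∑ j ∈ Finset.Icc (r - (n:ℤ)) r, φ j := by
  rw [Fin.sum_univ_eq_sum_range (fun ℓ => φ (r - (ℓ:ℤ))) (n+1)]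
  refine Finset.sum_nbij' (fun i => r - (i:ℤ)) (fun j => (r - j).toNat) ?_ ?_ ?_ ?_ ?_
  · intro i hi
    simp only [Finset.mem_range] at hi
    simp only [Finset.mem_Icc]
    omega
  · intro j hj
    simp only [Finset.mem_Icc] at hj
    simp only [Finset.mem_range]
    omega
  · intro i hi; simp only [Finset.mem_range] at hi; omega
  · intro j hj; simp only [Finset.mem_Icc] at hj; omega
  · intro i _; rfl

lemma coeFn_comb {ι : Type*} (s : Finset ι) (e : ι → ℤ) (cc : ι → ℂ) :
    ⇑(∑ i ∈ s, cc i • (fourierLp 2 (e i) : Lp ℂ 2 μ₀)) =ᵐ[μ₀]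
      fun t => ∑ i ∈ s, cc i * fourier (e i) t := by
  induction s using Finset.cons_induction with
  | empty =>
    simp only [Finset.sum_empty]
    filter_upwards [Lp.coeFn_zero ℂ 2 μ₀] with t ht using ht
  | cons i s hi ih =>
    rw [Finset.sum_cons]
    filter_upwards [Lp.coeFn_add (cc i • (fourierLp 2 (e i) : Lp ℂ 2 μ₀))
        (∑ j ∈ s, cc j • (fourierLp 2 (e j) : Lp ℂ 2 μ₀)), ih,
      Lp.coeFn_smul (cc i) (fourierLp 2 (e i) : Lp ℂ 2 μ₀),
      coeFn_fourierLp 2 (e i)] with t h1 h2 h3 h4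
    rw [h1, Finset.sum_cons, Pi.add_apply, h2, h3, Pi.smul_apply, h4, smul_eq_mul]

lemma norm_comb_sq {ι : Type*} (s : Finset ι) (e : ι → ℤ) (he : Function.Injective e)
    (cc : ι → ℂ) :
    ‖∑ i ∈ s, cc i • (fourierLp 2 (e i) : Lp ℂ 2 μ₀)‖ ^ 2 = ∑ i ∈ s, ‖cc i‖ ^ 2 := by
  have hON : Orthonormal ℂ (fun i : ι => (fourierLp 2 (e i) : Lp ℂ 2 μ₀)) :=
    orthonormal_fourier.comp e he
  have := hON.inner_sum cc cc s
  rw [@norm_sq_eq_re_inner ℂ, this, map_sum]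
  refine Finset.sum_congr rfl fun ℓ _ => ?_
  rw [RCLike.conj_mul]
  simp [← Complex.ofReal_pow]

def gT (n : ℕ) (x : Fin (n+1) → ℂ) : AddCircle (2*Real.pi) → ℂ :=
  fun t => ∑ ℓ : Fin (n+1), x ℓ * fourier (-(ℓ:ℤ)) t

def Gx (n : ℕ) (x : Fin (n+1) → ℂ) : Lp ℂ 2 μ₀ :=
  ∑ ℓ : Fin (n+1), x ℓ • fourierLp 2 (-(ℓ:ℤ))

lemma coeFn_Gx (n : ℕ) (x : Fin (n+1) → ℂ) : ⇑(Gx n x) =ᵐ[μ₀] gT n x :=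
  coeFn_comb Finset.univ (fun ℓ : Fin (n+1) => -(ℓ:ℤ)) x

lemma memLp_gT (n : ℕ) (x : Fin (n+1) → ℂ) : MemLp (gT n x) 2 μ₀ :=
  (Lp.memLp (Gx n x)).ae_eq (coeFn_Gx n x)

lemma norm_Gx_sq (n : ℕ) (x : Fin (n+1) → ℂ) :
    ‖Gx n x‖ ^ 2 = ∑ ℓ : Fin (n+1), ‖x ℓ‖ ^ 2 :=
  norm_comb_sq Finset.univ (fun ℓ : Fin (n+1) => -(ℓ:ℤ))
    (fun a b hab => by
      have : -(a:ℤ) = -(b:ℤ) := hab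
      omega) x

lemma mulVec_eq (hf : MemLp f ⊤ μ₀) (n : ℕ) (x : Fin (n+1) → ℂ) (k : Fin (n+1)) :
    (toeplitzMat f n).mulVec x k = fourierCoeff (fun t => f t * gT n x t) (-(k:ℤ)) := by
  have key : ∀ t, fourier (-(-(k:ℤ))) t • (f t * gT n x t)
      = ∑ ℓ : Fin (n+1), x ℓ * (fourier ((k:ℤ) - (ℓ:ℤ)) t * f t) := by
    intro t
    rw [neg_neg, smul_eq_mul]
    simp only [gT, Finset.mul_sum]
    refine Finset.sum_congr rfl fun ℓ _ => ?_
    have : ((k:ℤ)) - (ℓ:ℤ) = (k:ℤ) + (-(ℓ:ℤ)) := by ring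
    rw [this, fourier_add]
    ring
  rw [fourierCoeff]
  simp_rw [key]
  rw [integral_finset_sum _ (fun ℓ _ => (integrable_fourier_mul hf _).const_mul _)]
  simp_rw [integral_const_mul, integral_fourier_mul, neg_sub]
  simp only [Matrix.mulVec, dotProduct, toeplitzMat]
  exact Finset.sum_congr rfl fun ℓ _ => mul_comm _ _

lemma eLpNorm_gT_toReal (n : ℕ) (x : Fin (n+1) → ℂ) :
    (eLpNorm (gT n x) 2 μ₀).toReal = ‖Gx n x‖ := by
  rw [Lp.norm_def, eLpNorm_congr_ae (coeFn_Gx n x)]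

lemma opNorm_le (hf : MemLp f ⊤ μ₀) (n : ℕ) :
    matOpNorm (toeplitzMat f n) ≤ (eLpNorm f ⊤ μ₀).toReal := by
  refine ContinuousLinearMap.opNorm_le_bound _ ENNReal.toReal_nonneg fun v => ?_
  set x : Fin (n+1) → ℂ := fun k => v k with hxdef
  have hg : MemLp (gT n x) 2 μ₀ := memLp_gT n x
  have hh : MemLp (fun t => f t * gT n x t) 2 μ₀ := memLp_mul hf hg
  have hAv : ‖(LinearMap.toContinuousLinearMap (Matrix.toEuclideanLin (toeplitzMat f n))) v‖^2
      = ∑ k : Fin (n+1), ‖(toeplitzMat f n).mulVec x k‖^2 := by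
    rw [LinearMap.coe_toContinuousLinearMap', Matrix.toEuclideanLin_apply,
      EuclideanSpace.norm_eq, Real.sq_sqrt (by positivity)]
  have h1 : ∑ k : Fin (n+1), ‖(toeplitzMat f n).mulVec x k‖^2
      = ∑ j ∈ Finset.Icc ((0:ℤ) - (n:ℤ)) 0, ‖fourierCoeff (fun t => f t * gT n x t) j‖^2 := by
    rw [← sum_shift (fun j => ‖fourierCoeff (fun t => f t * gT n x t) j‖^2) 0 n]
    refine Finset.sum_congr rfl fun k _ => ?_
    rw [mulVec_eq hf n x k]
    norm_num
  have h2 : ∑ j ∈ Finset.Icc ((0:ℤ)-(n:ℤ)) 0, ‖fourierCoeff (fun t => f t * gT n x t) j‖^2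
      ≤ (eLpNorm (fun t => f t * gT n x t) 2 μ₀).toReal^2 :=
    sum_le_hasSum _ (fun j _ => sq_nonneg _) (hasSum_sq_fourierCoeff hh)
  have h4 : (eLpNorm (gT n x) 2 μ₀).toReal = ‖v‖ := by
    rw [eLpNorm_gT_toReal]
    have hG := norm_Gx_sq n x
    have hv : ‖v‖^2 = ∑ ℓ : Fin (n+1), ‖x ℓ‖^2 := by
      rw [EuclideanSpace.norm_eq, Real.sq_sqrt (by positivity)]
    have := congrArg Real.sqrt (hG.trans hv.symm)
    rwa [Real.sqrt_sq (norm_nonneg _), Real.sqrt_sq (norm_nonneg _)] at this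
  have h3 : (eLpNorm (fun t => f t * gT n x t) 2 μ₀).toReal
      ≤ (eLpNorm f ⊤ μ₀).toReal * ‖v‖ := by
    rw [← h4, ← ENNReal.toReal_mul]
    exact ENNReal.toReal_mono (ENNReal.mul_ne_top hf.2.ne hg.2.ne) (eLpNorm_mul_le hf hg)
  have hfin : ‖(LinearMap.toContinuousLinearMap (Matrix.toEuclideanLin (toeplitzMat f n))) v‖^2
      ≤ ((eLpNorm f ⊤ μ₀).toReal * ‖v‖)^2 := by
    rw [hAv, h1]
    exact h2.trans (pow_le_pow_left₀ ENNReal.toReal_nonneg h3 2)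
  have h5 := Real.sqrt_le_sqrt hfin
  rwa [Real.sqrt_sq (norm_nonneg _),
    Real.sqrt_sq (mul_nonneg ENNReal.toReal_nonneg (norm_nonneg _))] at h5

lemma exists_poly (hf : MemLp f ⊤ μ₀) (hsm : StronglyMeasurable f)
    {θ : ℝ} (hθ0 : 0 ≤ θ) (hθ : θ < (eLpNorm f ⊤ μ₀).toReal) :
    ∃ cf : ℤ →₀ ℂ,
      θ * ‖(cf.sum fun i a => a • (fourierLp 2 i : Lp ℂ 2 μ₀))‖ <
        (eLpNorm (fun t => f t * ∑ i ∈ cf.support, cf i * fourier i t) 2 μ₀).toReal := by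
  set Lr := (eLpNorm f ⊤ μ₀).toReal with hLr
  have hLr0 : 0 ≤ Lr := ENNReal.toReal_nonneg
  set c := (θ + Lr)/2 with hcdef
  have hc1 : θ < c := by simp only [hcdef]; linarith
  have hc2 : c < Lr := by simp only [hcdef]; linarith
  have hc0 : 0 ≤ c := by linarith
  set S := {t : AddCircle (2*Real.pi) | c < ‖f t‖} with hSdef
  have hS : MeasurableSet S := measurableSet_lt measurable_const hsm.measurable.norm
  have hSpos : 0 < μ₀ S := by
    rcases eq_or_lt_of_le (zero_le : 0 ≤ μ₀ S) with h | h
    · exfalso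
      have hae : ∀ᵐ t ∂μ₀, ‖f t‖ ≤ c := by
        rw [ae_iff]
        have : {t | ¬‖f t‖ ≤ c} = S := by ext t; simp [hSdef, not_le]
        rw [this, ← h]
      have h1 : eLpNorm f ⊤ μ₀ ≤ ENNReal.ofReal c := by
        rw [eLpNorm_exponent_top]
        exact eLpNormEssSup_le_of_ae_bound hae
      have h2 : Lr ≤ c :=
        le_trans (ENNReal.toReal_mono ENNReal.ofReal_ne_top h1) (ENNReal.toReal_ofReal hc0).le
      linarith
    · exact h
  set g₀ : AddCircle (2*Real.pi) → ℂ := S.indicator (fun _ => (1:ℂ)) with hg₀def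
  have hg₀ : MemLp g₀ 2 μ₀ := memLp_indicator_const 2 hS 1 (Or.inr (measure_ne_top μ₀ S))
  set b := (eLpNorm g₀ 2 μ₀).toReal with hbdef
  have hb : 0 < b := by
    rcases eq_or_ne (eLpNorm g₀ 2 μ₀) 0 with h | h
    · exfalso
      have hz : g₀ =ᵐ[μ₀] 0 := (eLpNorm_eq_zero_iff hg₀.1 two_ne_zero).mp h
      have : μ₀ {t | g₀ t ≠ 0} = 0 := by
        have := hz
        rw [EventuallyEq, ae_iff] at this
        simpa using this
      have hsub : S ⊆ {t | g₀ t ≠ 0} := by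
        intro t ht
        simp only [Set.mem_setOf_eq, hg₀def, Set.indicator_of_mem ht]
        exact one_ne_zero
      exact absurd (measure_mono_null hsub this) hSpos.ne'
    · exact ENNReal.toReal_pos h hg₀.2.ne
  have hfg₀ : ENNReal.ofReal c * eLpNorm g₀ 2 μ₀ ≤ eLpNorm (fun t => f t * g₀ t) 2 μ₀ := by
    have hmono : ∀ t, ‖((c : ℝ) • g₀) t‖ ≤ ‖(fun t => f t * g₀ t) t‖ := by
      intro t
      by_cases ht : t ∈ S
      · have h1 : g₀ t = 1 := by simp [hg₀def, Set.indicator_of_mem ht]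
        have h2 : ‖((c : ℝ) • g₀) t‖ = c := by
          rw [Pi.smul_apply, h1, norm_smul, norm_one, mul_one, Real.norm_eq_abs,
            abs_of_nonneg hc0]
        rw [h2]
        show c ≤ ‖f t * g₀ t‖
        rw [h1, mul_one]
        exact le_of_lt ht
      · have h1 : g₀ t = 0 := by simp [hg₀def, Set.indicator_of_notMem ht]
        simp [h1]
    calc ENNReal.ofReal c * eLpNorm g₀ 2 μ₀
        = eLpNorm ((c:ℝ) • g₀) 2 μ₀ := by
          rw [eLpNorm_const_smul, ← Real.enorm_eq_ofReal hc0]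
      _ ≤ _ := eLpNorm_mono hmono
  set δ := (c - θ) * b / (2 * (Lr + θ + 1)) with hδdef
  have hδ : 0 < δ := by
    apply div_pos (mul_pos (by linarith) hb)
    linarith
  set G₀ := hg₀.toLp g₀ with hG₀def
  have hbG : ‖G₀‖ = b := Lp.norm_toLp g₀ hg₀
  have hdense : Dense (↑(Submodule.span ℂ (Set.range (@fourierLp (2*Real.pi) _ 2 _))) :
      Set (Lp ℂ 2 μ₀)) := by
    rw [Submodule.dense_iff_topologicalClosure_eq_top]
    exact span_fourierLp_closure_eq_top (by norm_num)
  obtain ⟨P, hPmem, hPdist⟩ : ∃ P ∈ Submodule.span ℂ (Set.range (@fourierLp (2*Real.pi) _ 2 _)),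
      ‖G₀ - P‖ < δ := by
    obtain ⟨P, hP1, hP2⟩ := Metric.mem_closure_iff.mp (hdense G₀) δ hδ
    exact ⟨P, hP1, by rwa [dist_eq_norm] at hP2⟩
  obtain ⟨cf, hcf⟩ := Finsupp.mem_span_range_iff_exists_finsupp.mp hPmem
  set pf : AddCircle (2*Real.pi) → ℂ := fun t => ∑ i ∈ cf.support, cf i * fourier i t with hpfdef
  have hPae : ⇑P =ᵐ[μ₀] pf := by
    rw [← hcf, Finsupp.sum]
    exact coeFn_comb cf.support id (fun i => cf i)
  have hpf : MemLp pf 2 μ₀ := (Lp.memLp P).ae_eq hPae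
  have hw : MemLp (fun t => f t * pf t) 2 μ₀ := memLp_mul hf hpf
  set W := (eLpNorm (fun t => f t * pf t) 2 μ₀).toReal with hWdef
  have hdiffae : ⇑(G₀ - P) =ᵐ[μ₀] fun t => g₀ t - pf t := by
    filter_upwards [Lp.coeFn_sub G₀ P, hg₀.coeFn_toLp, hPae] with t h1 h2 h3
    rw [h1, Pi.sub_apply, h2, h3]
  have hdiff : eLpNorm (fun t => g₀ t - pf t) 2 μ₀ = ENNReal.ofReal ‖G₀ - P‖ := by
    rw [← eLpNorm_congr_ae hdiffae, Lp.norm_def,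
      ENNReal.ofReal_toReal (Lp.eLpNorm_ne_top (G₀ - P))]
  have hsplit : eLpNorm (fun t => f t * g₀ t) 2 μ₀
      ≤ eLpNorm (fun t => f t * pf t) 2 μ₀ + eLpNorm f ⊤ μ₀ * ENNReal.ofReal δ := by
    have heq : (fun t => f t * g₀ t)
        = (fun t => f t * pf t) + fun t => f t * (g₀ t - pf t) := by
      funext t; simp [mul_sub]
    rw [heq]
    refine le_trans (eLpNorm_add_le (hw.1) ((memLp_mul hf (hg₀.sub hpf)).1) (by norm_num)) ?_
    gcongr
    refine le_trans (eLpNorm_mul_le hf (hg₀.sub hpf)) ?_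
    gcongr
    exact hdiff.le.trans (ENNReal.ofReal_le_ofReal hPdist.le)
  have hreal : c * b ≤ W + Lr * δ := by
    have hrhs_ne : eLpNorm (fun t => f t * pf t) 2 μ₀ + eLpNorm f ⊤ μ₀ * ENNReal.ofReal δ ≠ ⊤ :=
      ENNReal.add_ne_top.mpr ⟨hw.2.ne, ENNReal.mul_ne_top hf.2.ne ENNReal.ofReal_ne_top⟩
    have := ENNReal.toReal_mono hrhs_ne (le_trans hfg₀ hsplit)
    rwa [ENNReal.toReal_mul, ENNReal.toReal_add hw.2.ne
        (ENNReal.mul_ne_top hf.2.ne ENNReal.ofReal_ne_top), ENNReal.toReal_mul,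
      ENNReal.toReal_ofReal hc0, ENNReal.toReal_ofReal hδ.le] at this
  have hPnorm : ‖P‖ ≤ b + δ := by
    have h1 : ‖P‖ - ‖G₀‖ ≤ ‖P - G₀‖ := norm_sub_norm_le P G₀
    rw [norm_sub_rev] at h1
    linarith
  refine ⟨cf, ?_⟩
  rw [hcf]
  have halg : θ * (b + δ) < c * b - Lr * δ := by
    have h1 : (Lr + θ) * δ ≤ (Lr + θ + 1) * δ := by nlinarith
    have h2 : (Lr + θ + 1) * δ = (c - θ) * b / 2 := by
      rw [hδdef]; field_simp
    nlinarith
  have : θ * ‖P‖ ≤ θ * (b + δ) := by nlinarith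
  calc θ * ‖P‖ ≤ θ * (b + δ) := this
    _ < c * b - Lr * δ := halg
    _ ≤ W := by linarith
lemma main_sm (hf : MemLp f ⊤ μ₀) (hsm : StronglyMeasurable f) :
    Tendsto (fun n : ℕ => matOpNorm (toeplitzMat f n)) atTop
      (𝓝 ((eLpNorm f ⊤ μ₀).toReal)) := by
  rw [tendsto_order]
  constructor
  · intro a ha
    rcases lt_or_ge a 0 with ha0 | ha0
    · exact Eventually.of_forall fun n => lt_of_lt_of_le ha0 (norm_nonneg _)
    set Lr := (eLpNorm f ⊤ μ₀).toReal with hLrdef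
    set θ := (a + Lr)/2 with hθdef
    have hθa : a < θ := by simp only [hθdef]; linarith
    have hθL : θ < Lr := by simp only [hθdef]; linarith
    have hθ0 : 0 ≤ θ := by linarith
    obtain ⟨cf, hcf⟩ := exists_poly hf hsm hθ0 hθL
    set P : Lp ℂ 2 μ₀ := cf.sum fun i a => a • (fourierLp 2 i : Lp ℂ 2 μ₀) with hPdef
    set pf : AddCircle (2*Real.pi) → ℂ := fun t => ∑ i ∈ cf.support, cf i * fourier i t
      with hpfdef
    have hPae : ⇑P =ᵐ[μ₀] pf := by
      rw [hPdef, Finsupp.sum]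
      exact coeFn_comb cf.support id (fun i => cf i)
    have hpf : MemLp pf 2 μ₀ := (Lp.memLp P).ae_eq hPae
    set w : AddCircle (2*Real.pi) → ℂ := fun t => f t * pf t with hwdef
    have hw : MemLp w 2 μ₀ := memLp_mul hf hpf
    set W := (eLpNorm w 2 μ₀).toReal with hWdef
    have hPpos : 0 < ‖P‖ := by
      rcases (norm_nonneg P).eq_or_lt with h | h
      · exfalso
        have hP0 : P = 0 := norm_eq_zero.mp h.symm
        have hpf0 : pf =ᵐ[μ₀] 0 := by
          filter_upwards [hPae, Lp.coeFn_zero ℂ 2 μ₀] with t h1 h2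
          rw [← h1, hP0, h2]
        have hw0 : w =ᵐ[μ₀] 0 := by
          filter_upwards [hpf0] with t h1
          simp [hwdef, h1]
        have : W = 0 := by
          rw [hWdef, eLpNorm_congr_ae hw0, eLpNorm_zero]
          rfl
        rw [← h, mul_zero] at hcf
        linarith
      · exact h
    have hsq : HasSum (fun j : ℤ => ‖fourierCoeff w j‖ ^ 2) (W ^ 2) := hasSum_sq_fourierCoeff hw
    have haP : 0 ≤ a * ‖P‖ := mul_nonneg ha0 (norm_nonneg _)
    have hlt : (a * ‖P‖) ^ 2 < W ^ 2 := by
      have h1 : a * ‖P‖ < W := lt_of_le_of_lt (by nlinarith) hcf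
      exact pow_lt_pow_left₀ h1 haP two_ne_zero
    obtain ⟨s₀, hs₀⟩ := (hsq.eventually (eventually_gt_nhds hlt)).exists
    set m : ℕ := cf.support.sup Int.natAbs with hmdef
    set Mb : ℕ := s₀.sup Int.natAbs with hMdef
    set K : ℕ := max m Mb with hKdef
    have hsuppK : ∀ i ∈ cf.support, -(K:ℤ) ≤ i ∧ i ≤ (K:ℤ) := by
      intro i hi
      have h1 : i.natAbs ≤ m := Finset.le_sup hi
      have h2 : m ≤ K := le_max_left _ _
      omega
    have hs₀K : ∀ j ∈ s₀, -(K:ℤ) ≤ j ∧ j ≤ (K:ℤ) := by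
      intro j hj
      have h1 : j.natAbs ≤ Mb := Finset.le_sup hj
      have h2 : Mb ≤ K := le_max_right _ _
      omega
    filter_upwards [eventually_ge_atTop (2*K)] with n hn
    set x : Fin (n+1) → ℂ := fun ℓ => cf ((K:ℤ) - (ℓ:ℤ)) with hxdef
    have hsubsupp : cf.support ⊆ Finset.Icc ((K:ℤ) - (n:ℤ)) (K:ℤ) := by
      intro i hi
      obtain ⟨h1, h2⟩ := hsuppK i hi
      simp only [Finset.mem_Icc]
      omega
    have hsubs₀ : s₀ ⊆ Finset.Icc ((K:ℤ) - (n:ℤ)) (K:ℤ) := by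
      intro j hj
      obtain ⟨h1, h2⟩ := hs₀K j hj
      simp only [Finset.mem_Icc]
      omega
    have hgT : gT n x = fun t => fourier (-(K:ℤ)) t * pf t := by
      funext t
      have h1 : ∀ ℓ : Fin (n+1), x ℓ * fourier (-(ℓ:ℤ)) t
          = (fun j => cf j * fourier (j - (K:ℤ)) t) ((K:ℤ) - (ℓ:ℤ)) := by
        intro ℓ
        simp only [hxdef]
        congr 2
        ring
      calc gT n x t = ∑ ℓ : Fin (n+1), (fun j => cf j * fourier (j - (K:ℤ)) t) ((K:ℤ) - (ℓ:ℤ)) :=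
            Finset.sum_congr rfl fun ℓ _ => h1 ℓ
        _ = ∑ j ∈ Finset.Icc ((K:ℤ) - (n:ℤ)) (K:ℤ), cf j * fourier (j - (K:ℤ)) t :=
            sum_shift (fun j => cf j * fourier (j - (K:ℤ)) t) (K:ℤ) n
        _ = ∑ j ∈ cf.support, cf j * fourier (j - (K:ℤ)) t := by
            refine (Finset.sum_subset hsubsupp fun j _ hj => ?_).symm
            rw [Finsupp.notMem_support_iff.mp hj, zero_mul]
        _ = fourier (-(K:ℤ)) t * pf t := by
            rw [hpfdef, Finset.mul_sum]
            refine Finset.sum_congr rfl fun j _ => ?_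
            have : j - (K:ℤ) = -(K:ℤ) + j := by ring
            rw [this, fourier_add]
            ring
    have hmv : ∀ k : Fin (n+1), (toeplitzMat f n).mulVec x k
        = fourierCoeff w ((K:ℤ) - (k:ℤ)) := by
      intro k
      rw [mulVec_eq hf n x k]
      have h1 : (fun t => f t * gT n x t) = fun t => fourier (-(K:ℤ)) t * w t := by
        funext t
        rw [hgT, hwdef]
        ring
      rw [h1, fourierCoeff_fourier_mul]
      congr 1
      ring
    -- norms
    set A := LinearMap.toContinuousLinearMap (Matrix.toEuclideanLin (toeplitzMat f n)) with hAdef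
    set v : EuclideanSpace ℂ (Fin (n+1)) := (WithLp.equiv 2 _).symm x with hvdef
    have hvnorm : ‖v‖ = ‖P‖ := by
      have h1 : ‖v‖ ^ 2 = ∑ ℓ : Fin (n+1), ‖x ℓ‖ ^ 2 := by
        rw [hvdef, EuclideanSpace.norm_eq, Real.sq_sqrt (by positivity)]
        exact Finset.sum_congr rfl fun ℓ _ => by rfl
      have h2 : ∑ ℓ : Fin (n+1), ‖x ℓ‖ ^ 2 = ‖P‖ ^ 2 := by
        calc ∑ ℓ : Fin (n+1), ‖x ℓ‖ ^ 2
            = ∑ ℓ : Fin (n+1), (fun j => ‖cf j‖ ^ 2) ((K:ℤ) - (ℓ:ℤ)) := rfl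
          _ = ∑ j ∈ Finset.Icc ((K:ℤ) - (n:ℤ)) (K:ℤ), ‖cf j‖ ^ 2 :=
              sum_shift (fun j => ‖cf j‖ ^ 2) (K:ℤ) n
          _ = ∑ j ∈ cf.support, ‖cf j‖ ^ 2 := by
              refine (Finset.sum_subset hsubsupp fun j _ hj => ?_).symm
              rw [Finsupp.notMem_support_iff.mp hj]
              simp
          _ = ‖P‖ ^ 2 := by
              rw [hPdef, Finsupp.sum]
              exact (norm_comb_sq cf.support id (fun a b hab => hab) (fun i => cf i)).symm
      have := congrArg Real.sqrt (h1.trans (h2.trans rfl))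
      rwa [Real.sqrt_sq (norm_nonneg _), Real.sqrt_sq (norm_nonneg _)] at this
    have hAv : ‖A v‖ ^ 2 = ∑ k : Fin (n+1), ‖(toeplitzMat f n).mulVec x k‖ ^ 2 := by
      rw [hAdef, LinearMap.coe_toContinuousLinearMap', Matrix.toEuclideanLin_apply,
        EuclideanSpace.norm_eq, Real.sq_sqrt (by positivity)]
      rfl
    have hAv2 : (a * ‖P‖) ^ 2 < ‖A v‖ ^ 2 := by
      rw [hAv]
      calc (a * ‖P‖) ^ 2 < ∑ j ∈ s₀, ‖fourierCoeff w j‖ ^ 2 := hs₀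
        _ ≤ ∑ j ∈ Finset.Icc ((K:ℤ) - (n:ℤ)) (K:ℤ), ‖fourierCoeff w j‖ ^ 2 :=
            Finset.sum_le_sum_of_subset_of_nonneg hsubs₀ fun j _ _ => sq_nonneg _
        _ = ∑ k : Fin (n+1), (fun j => ‖fourierCoeff w j‖ ^ 2) ((K:ℤ) - (k:ℤ)) :=
            (sum_shift (fun j => ‖fourierCoeff w j‖ ^ 2) (K:ℤ) n).symm
        _ = ∑ k : Fin (n+1), ‖(toeplitzMat f n).mulVec x k‖ ^ 2 := by
            refine Finset.sum_congr rfl fun k _ => ?_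
            rw [hmv k]
    have hAv3 : a * ‖v‖ < ‖A v‖ := by
      rw [hvnorm]
      exact lt_of_pow_lt_pow_left₀ 2 (norm_nonneg _) hAv2
    have h5 : ‖A v‖ ≤ matOpNorm (toeplitzMat f n) * ‖v‖ := A.le_opNorm v
    have hvpos : 0 < ‖v‖ := by rw [hvnorm]; exact hPpos
    have := lt_of_lt_of_le hAv3 h5
    exact (mul_lt_mul_iff_left₀ hvpos).mp this
  · intro b hb
    exact Eventually.of_forall fun n => lt_of_le_of_lt (opNorm_le hf n) hb
end
end TpAux
end TpAuxSection

/-- For an essentially bounded measurable function `f` on the circle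
`ℝ/2πℤ`, the operator norms of the Toeplitz matrices `T_n(f)` converge to the essential
supremum norm of `f`: `lim_{n → ∞} ‖T_n(f)‖ = ‖f‖_∞`. -/
theorem toeplitz_norm_tendsto_essSup
    (f : AddCircle (2 * Real.pi) → ℂ) (hf : MemLp f ⊤ haarAddCircle) :
    Tendsto (fun n : ℕ => matOpNorm (toeplitzMat f n)) atTop
      (𝓝 (eLpNorm f ⊤ haarAddCircle).toReal) := by
  set f' := hf.1.mk f with hf'def
  have hae : f =ᵐ[haarAddCircle] f' := hf.1.ae_eq_mk
  have hf' : MemLp f' ⊤ haarAddCircle := hf.ae_eq hae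
  have hsm : StronglyMeasurable f' := hf.1.stronglyMeasurable_mk
  have hmat : ∀ n, toeplitzMat f n = toeplitzMat f' n := by
    intro n
    funext k l
    exact TpAux.fourierCoeff_congr hae _
  have hsn : eLpNorm f ⊤ haarAddCircle = eLpNorm f' ⊤ haarAddCircle := eLpNorm_congr_ae hae
  simp_rw [hmat, hsn]
  exact TpAux.main_sm hf' hsm
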